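/- With Ω the rhombus conv{(1,0),(0,1),(-1,0),(0,-1)} and p_ε as above, any function q that is continuous on Ω, affine on each of the two triangles T₁ = conv{(0,1),(0,-1),(1,0)} and T₂ = conv{(0,-1),(0,1),(-1,0)}, and vanishes on the segment {0}×(-1,1), satisfies ‖p_ε - q‖_{L²(Ω)} ≥ c for some constant c > 0 independent of ε ∈ (0, 1/2] and of q, provided additionally ∫_Ω q = 0. -/

import Mathlib

open MeasureTheory

set_option maxHeartbeats 1000000 in
/-- On the rhombus `Ω = {|x|+|y| < 1}` with the two-triangle triangulation
(right triangle `T₁ = Ω ∩ {x > 0}` and left triangle `T₂ = Ω ∩ {x < 0}`),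
there exists `c > 0` such that for every `ε ∈ (0, 1/2]` and every function
`q` which is continuous on `Ω`, affine on each of the two triangles,
vanishes on the segment `{0} × (-1,1)` and has zero mean over `Ω`, the
L² distance of the exact pressure `p_ε` to `q` is at least `c`. -/
theorem rhombus_continuous_pressure_lower_bound :
    ∃ c : ℝ, 0 < c ∧
      ∀ ε : ℝ, ε ∈ Set.Ioc (0 : ℝ) (1 / 2) →
      ∀ q : ℝ × ℝ → ℝ,
        ContinuousOn q {z : ℝ × ℝ | |z.1| + |z.2| < 1} →
        (∃ a₁ b₁ c₁ : ℝ, ∀ z ∈ {z : ℝ × ℝ | 0 < z.1 ∧ |z.1| + |z.2| < 1},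
            q z = a₁ * z.1 + b₁ * z.2 + c₁) →
        (∃ a₂ b₂ c₂ : ℝ, ∀ z ∈ {z : ℝ × ℝ | z.1 < 0 ∧ |z.1| + |z.2| < 1},
            q z = a₂ * z.1 + b₂ * z.2 + c₂) →
        (∀ y : ℝ, y ∈ Set.Ioo (-1 : ℝ) 1 → q ((0 : ℝ), y) = 0) →
        (∫ z in {z : ℝ × ℝ | |z.1| + |z.2| < 1}, q z) = 0 →
        c ≤ Real.sqrt (∫ z in {z : ℝ × ℝ | |z.1| + |z.2| < 1},
              ((if z.1 ≤ -ε then (-1 : ℝ) else if z.1 ≤ ε then z.1 / ε else 1)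
                - q z) ^ 2) := by
  refine ⟨1/25, by norm_num, ?_⟩
  intro ε hε q hc h1 h2 hseg _
  obtain ⟨a₁, b₁, c₁, hq1⟩ := h1
  obtain ⟨a₂, b₂, c₂, hq2⟩ := h2
  set Ω : Set (ℝ × ℝ) := {z : ℝ × ℝ | |z.1| + |z.2| < 1} with hΩdef
  have hΩopen : IsOpen Ω := by
    have : Continuous fun z : ℝ × ℝ => |z.1| + |z.2| := by continuity
    exact isOpen_lt this continuous_const
  have hΩmeas : MeasurableSet Ω := hΩopen.measurableSet
  -- Step A: b₁ = c₁ = 0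
  have key : ∀ y ∈ Set.Ioo (-1:ℝ) 1, b₁ * y + c₁ = 0 := by
    intro y hy
    have hya : |y| < 1 := abs_lt.2 ⟨hy.1, hy.2⟩
    have hΩy : ((0:ℝ), y) ∈ Ω := by simp [hΩdef, hya]
    have hδ : (0:ℝ) < 1 - |y| := by linarith
    have hmem : Set.Ioo (0:ℝ) (1 - |y|) ∈ nhdsWithin (0:ℝ) (Set.Ioi 0) :=
      Ioo_mem_nhdsGT_of_mem ⟨le_refl _, hδ⟩
    have h3 : Filter.Tendsto (fun x : ℝ => ((x, y) : ℝ × ℝ))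
        (nhdsWithin (0:ℝ) (Set.Ioi 0)) (nhdsWithin ((0:ℝ), y) Ω) := by
      apply tendsto_nhdsWithin_of_tendsto_nhds_of_eventually_within
      · exact ((continuous_id.prodMk continuous_const).tendsto 0).mono_left
          nhdsWithin_le_nhds
      · filter_upwards [hmem] with x hx
        have hx0 : 0 < x := hx.1
        have : |x| + |y| < 1 := by
          rw [abs_of_pos hx0]; linarith [hx.2]
        simpa [hΩdef] using this
    have h2' : Filter.Tendsto (fun x : ℝ => q (x, y))
        (nhdsWithin (0:ℝ) (Set.Ioi 0)) (nhds 0) := by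
      have hcw := hc ((0:ℝ), y) hΩy
      rw [ContinuousWithinAt, hseg y hy] at hcw
      exact hcw.comp h3
    have h1' : Filter.Tendsto (fun x : ℝ => q (x, y))
        (nhdsWithin (0:ℝ) (Set.Ioi 0)) (nhds (b₁ * y + c₁)) := by
      have hpoly : Filter.Tendsto (fun x : ℝ => a₁ * x + b₁ * y + c₁)
          (nhdsWithin (0:ℝ) (Set.Ioi 0)) (nhds (b₁ * y + c₁)) := by
        have hcont : Continuous fun x : ℝ => a₁ * x + b₁ * y + c₁ := by continuity
        have := (hcont.tendsto 0).mono_left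
          (nhdsWithin_le_nhds (a := (0:ℝ)) (s := Set.Ioi 0))
        simpa using this
      apply hpoly.congr'
      filter_upwards [hmem] with x hx
      have hΩx : ((x, y) : ℝ × ℝ) ∈ {z : ℝ × ℝ | 0 < z.1 ∧ |z.1| + |z.2| < 1} := by
        refine ⟨hx.1, ?_⟩
        rw [abs_of_pos hx.1]; simpa using by linarith [hx.2]
      exact (hq1 (x, y) hΩx).symm
    exact tendsto_nhds_unique h1' h2'
  have hc₁ : c₁ = 0 := by have := key 0 (by norm_num); linarith
  have hb₁ : b₁ = 0 := by have := key (1/2) (by norm_num); linarith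
  -- the exact pressure and the measurable version of q
  set p : ℝ × ℝ → ℝ :=
    fun z => if z.1 ≤ -ε then (-1 : ℝ) else if z.1 ≤ ε then z.1 / ε else 1 with hpdef
  set Q : ℝ × ℝ → ℝ :=
    fun z => if 0 < z.1 then a₁ * z.1 else a₂ * z.1 + b₂ * z.2 + c₂ with hQdef
  have hqQ : ∀ z ∈ Ω, z.1 ≠ 0 → q z = Q z := by
    intro z hz hz0
    rcases lt_or_gt_of_ne hz0 with hneg | hpos
    · rw [hq2 z ⟨hneg, hz⟩]; simp [hQdef, not_lt.2 hneg.le]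
    · rw [hq1 z ⟨hpos, hz⟩, hb₁, hc₁]; simp [hQdef, hpos]
  -- the line x = 0 is null
  have hline : volume {z : ℝ × ℝ | z.1 = 0} = 0 := by
    have : {z : ℝ × ℝ | z.1 = 0} = ({0} : Set ℝ) ×ˢ (Set.univ : Set ℝ) := by
      ext ⟨x, y⟩
      constructor
      · intro h; exact ⟨h, trivial⟩
      · intro h; exact h.1
    rw [this, Measure.volume_eq_prod, Measure.prod_prod]
    simp
  have hae : ∀ᵐ z ∂(volume : Measure (ℝ × ℝ)), z.1 ≠ 0 := by
    rw [MeasureTheory.ae_iff]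
    convert hline using 2
    ext z; simp
  have hcongr : (∫ z in Ω, (p z - q z) ^ 2) = ∫ z in Ω, (p z - Q z) ^ 2 := by
    apply setIntegral_congr_ae hΩmeas
    filter_upwards [hae] with z hz0 hz
    rw [hqQ z hz hz0]
  have hεpos : 0 < ε := hε.1
  -- measurability
  have hp : Measurable p := by
    rw [hpdef]
    apply Measurable.ite (measurableSet_le measurable_fst measurable_const)
      measurable_const
    exact Measurable.ite (measurableSet_le measurable_fst measurable_const)
      (measurable_fst.div_const ε) measurable_const
  have hQm : Measurable Q := by
    rw [hQdef]
    apply Measurable.ite (measurableSet_lt measurable_const measurable_fst)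
    · exact measurable_fst.const_mul a₁
    · exact ((measurable_fst.const_mul a₂).add (measurable_snd.const_mul b₂)).add
        measurable_const
  have hgm : Measurable fun z : ℝ × ℝ => (p z - Q z) ^ 2 := (hp.sub hQm).pow_const 2
  -- finiteness of the measure of Ω
  have hΩfin : volume Ω < ⊤ := by
    have hsub : Ω ⊆ (Set.Ioo (-1:ℝ) 1) ×ˢ (Set.Ioo (-1:ℝ) 1) := by
      intro z hz
      have hz' : |z.1| + |z.2| < 1 := hz
      have h1 : |z.1| < 1 := by nlinarith [abs_nonneg z.1, abs_nonneg z.2]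
      have h2 : |z.2| < 1 := by nlinarith [abs_nonneg z.1, abs_nonneg z.2]
      exact ⟨⟨(abs_lt.1 h1).1, (abs_lt.1 h1).2⟩, ⟨(abs_lt.1 h2).1, (abs_lt.1 h2).2⟩⟩
    refine lt_of_le_of_lt (measure_mono hsub) ?_
    rw [Measure.volume_eq_prod, Measure.prod_prod]
    simp [Real.volume_Ioo]
    exact ENNReal.mul_lt_top ENNReal.ofReal_lt_top ENNReal.ofReal_lt_top
  -- integrability on Ω
  set M : ℝ := |a₁| + |a₂| + |b₂| + |c₂| with hMdef
  have hbound : ∀ z ∈ Ω, ‖(p z - Q z) ^ 2‖ ≤ (1 + M) ^ 2 := by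
    intro z hz
    have hz' : |z.1| + |z.2| < 1 := hz
    have hz1 : |z.1| ≤ 1 := by nlinarith [abs_nonneg z.1, abs_nonneg z.2]
    have hz2 : |z.2| ≤ 1 := by nlinarith [abs_nonneg z.1, abs_nonneg z.2]
    have hpb : |p z| ≤ 1 := by
      simp only [hpdef]
      split_ifs with hA hB
      · simp
      · rw [abs_div, abs_of_pos hεpos]
        rw [div_le_one hεpos]
        push_neg at hA
        rcases abs_cases z.1 with ⟨he, _⟩ | ⟨he, _⟩
        · rw [he]; exact hB
        · rw [he]; linarith
      · simp
    have hQb : |Q z| ≤ M := by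
      simp only [hQdef, hMdef]
      split_ifs with hA
      · rw [abs_mul]
        have := abs_nonneg a₂; have := abs_nonneg b₂; have := abs_nonneg c₂
        nlinarith [abs_nonneg a₁, abs_nonneg z.1]
      · have t1 : |a₂ * z.1 + b₂ * z.2 + c₂| ≤ |a₂ * z.1| + |b₂ * z.2| + |c₂| := by
          calc |a₂ * z.1 + b₂ * z.2 + c₂| ≤ |a₂ * z.1 + b₂ * z.2| + |c₂| := abs_add_le _ _
            _ ≤ |a₂ * z.1| + |b₂ * z.2| + |c₂| := by linarith [abs_add_le (a₂ * z.1) (b₂ * z.2)]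
        rw [abs_mul, abs_mul] at t1
        have := abs_nonneg a₁; have := abs_nonneg a₂; have := abs_nonneg b₂
        nlinarith [abs_nonneg z.1, abs_nonneg z.2]
    have hd : |p z - Q z| ≤ 1 + M := by
      calc |p z - Q z| = |p z + -(Q z)| := by ring_nf
        _ ≤ |p z| + |Q z| := by simpa [abs_neg] using abs_add_le (p z) (-(Q z))
        _ ≤ 1 + M := by linarith
    rw [Real.norm_eq_abs, abs_pow]
    nlinarith [abs_nonneg (p z - Q z), hd]
  have hint : IntegrableOn (fun z : ℝ × ℝ => (p z - Q z) ^ 2) Ω := by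
    refine ⟨hgm.aestronglyMeasurable, ?_⟩
    apply HasFiniteIntegral.restrict_of_bounded (C := (1 + M) ^ 2) hΩfin
    exact (ae_restrict_iff' hΩmeas).2 (Filter.Eventually.of_forall hbound)
  -- the rectangle R
  set R : Set (ℝ × ℝ) := (Set.Ioo (1/2:ℝ) (3/4)) ×ˢ (Set.Ioo (-(1/4):ℝ) (1/4)) with hRdef
  have hRsub : R ⊆ Ω := by
    intro z hz
    obtain ⟨⟨hx1, hx2⟩, ⟨hy1, hy2⟩⟩ := hz
    have : |z.1| + |z.2| < 1 := by
      rw [abs_of_pos (by linarith : (0:ℝ) < z.1)]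
      rcases abs_cases z.2 with ⟨he, _⟩ | ⟨he, _⟩ <;> rw [he] <;> linarith
    exact this
  have hRmeas : MeasurableSet R := (measurableSet_Ioo).prod measurableSet_Ioo
  have hmono : (∫ z in R, (p z - Q z) ^ 2) ≤ ∫ z in Ω, (p z - Q z) ^ 2 := by
    apply setIntegral_mono_set hint
    · exact Filter.Eventually.of_forall fun z => sq_nonneg _
    · exact Filter.Eventually.of_forall hRsub
  -- on R the integrand is (1 - a₁ x)^2
  have hRval : (∫ z in R, (p z - Q z) ^ 2) = ∫ z in R, (1 - a₁ * z.1) ^ 2 := by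
    apply setIntegral_congr_fun hRmeas
    intro z hz
    show (p z - Q z) ^ 2 = (1 - a₁ * z.1) ^ 2
    obtain ⟨⟨hx1, hx2⟩, _⟩ := hz
    have hεlt : ε < z.1 := lt_of_le_of_lt hε.2 hx1
    have hpz : p z = 1 := by
      simp only [hpdef]
      rw [if_neg (by linarith), if_neg (by linarith)]
    have hQz : Q z = a₁ * z.1 := by
      simp only [hQdef]
      rw [if_pos (by linarith)]
    rw [hpz, hQz]
  -- compute the integral over R
  have hprod : (∫ z in R, (1 - a₁ * z.1) ^ 2) =
      (∫ x in Set.Ioo (1/2:ℝ) (3/4), (1 - a₁ * x) ^ 2) *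
        ∫ y in Set.Ioo (-(1/4):ℝ) (1/4), (1:ℝ) := by
    rw [hRdef, Measure.volume_eq_prod]
    have := setIntegral_prod_mul (μ := (volume : Measure ℝ)) (ν := (volume : Measure ℝ))
      (f := fun x : ℝ => (1 - a₁ * x) ^ 2) (g := fun _ : ℝ => (1:ℝ))
      (Set.Ioo (1/2:ℝ) (3/4)) (Set.Ioo (-(1/4):ℝ) (1/4))
    simpa using this
  have hy : (∫ y in Set.Ioo (-(1/4):ℝ) (1/4), (1:ℝ)) = 1/2 := by
    simp [Real.volume_Ioo]
    norm_num
  have hx : (∫ x in Set.Ioo (1/2:ℝ) (3/4), (1 - a₁ * x) ^ 2)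
      = 1/4 - (5/16) * a₁ + (19/192) * a₁ ^ 2 := by
    rw [← integral_Ioc_eq_integral_Ioo,
      ← intervalIntegral.integral_of_le (by norm_num : (1/2:ℝ) ≤ 3/4)]
    have hderiv : ∀ x ∈ Set.uIcc (1/2:ℝ) (3/4),
        HasDerivAt (fun x : ℝ => x - a₁ * x ^ 2 + a₁ ^ 2 * x ^ 3 / 3)
          ((1 - a₁ * x) ^ 2) x := by
      intro x _
      have h := ((hasDerivAt_id x).sub ((hasDerivAt_pow 2 x).const_mul a₁)).add
        (((hasDerivAt_pow 3 x).const_mul (a₁ ^ 2)).div_const 3)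
      refine h.congr_deriv ?_
      simp; ring
    have hcont : IntervalIntegrable (fun x : ℝ => (1 - a₁ * x) ^ 2) volume (1/2) (3/4) := by
      apply Continuous.intervalIntegrable; continuity
    rw [intervalIntegral.integral_eq_sub_of_hasDerivAt hderiv hcont]
    norm_num; ring
  -- put everything together
  rw [hcongr]
  have hlow : (1:ℝ)/608 ≤ ∫ z in Ω, (p z - Q z) ^ 2 := by
    have hq : (1:ℝ)/304 ≤ 1/4 - (5/16) * a₁ + (19/192) * a₁ ^ 2 := by
      nlinarith [sq_nonneg (19 * a₁ - 30)]
    have : (1:ℝ)/608 ≤ (∫ z in R, (p z - Q z) ^ 2) := by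
      rw [hRval, hprod, hy, hx]; linarith
    linarith
  rw [show (1:ℝ)/25 = Real.sqrt ((1/25)^2) by
    rw [Real.sqrt_sq (by norm_num)]]
  apply Real.sqrt_le_sqrt
  nlinarith
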